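/- Let n ≥ 1 and let (y,z) be nonnegative integers with y + z = n, 0 ≤ y < z. Suppose the binary digits of n in positions 3k, 3k+1, 3k+2 are (1,0,1) and the binary digits of z in positions 3k, 3k+1, 3k+2 are (0,1,0), and Σ_{i≥3k+3} ε_i^{(y)} 2^i < Σ_{i≥3k+3} ε_i^{(z)} 2^i. Then the digits of y in positions 3k+1 and 3k+2 are 1 and 0 respectively. -/

import Mathlib

/-- Thue–Morse set: nonnegative integers with an even number of binary ones. -/
def A0 : Set ℕ := {n : ℕ | Even ((Nat.digits 2 n).count 1)}

/-- Number of representations n = a + a', a < a', a, a' ∈ A. -/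
noncomputable def R2 (A : Set ℕ) (n : ℕ) : ℕ :=
  {p : ℕ × ℕ | p.1 < p.2 ∧ p.1 + p.2 = n ∧ p.1 ∈ A ∧ p.2 ∈ A}.ncard

/-- Number of representations n = a + a', a ≤ a', a, a' ∈ A. -/
noncomputable def R3 (A : Set ℕ) (n : ℕ) : ℕ :=
  {p : ℕ × ℕ | p.1 ≤ p.2 ∧ p.1 + p.2 = n ∧ p.1 ∈ A ∧ p.2 ∈ A}.ncard

/-- Number of ordered pairs (a,b), a ∈ A, b ∈ B, a + b = n. -/
noncomputable def RAB (A B : Set ℕ) (n : ℕ) : ℕ :=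
  {p : ℕ × ℕ | p.1 + p.2 = n ∧ p.1 ∈ A ∧ p.2 ∈ B}.ncard

theorem stmt_12 (n y z k : ℕ) (hn : 1 ≤ n) (hyz : y + z = n) (hlt : y < z)
    (hn3 : (n.testBit (3 * k), n.testBit (3 * k + 1), n.testBit (3 * k + 2))
        = (true, false, true))
    (hz3 : (z.testBit (3 * k), z.testBit (3 * k + 1), z.testBit (3 * k + 2))
        = (false, true, false))
    (hhigh : y / 2 ^ (3 * k + 3) < z / 2 ^ (3 * k + 3)) :
    y.testBit (3 * k + 1) = true ∧ y.testBit (3 * k + 2) = false := by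
  obtain ⟨hn0, hn1, hn2⟩ : n.testBit (3*k) = true ∧ n.testBit (3*k+1) = false ∧
      n.testBit (3*k+2) = true := by
    injection hn3 with a b; injection b with b c; exact ⟨a, b, c⟩
  obtain ⟨hz0, hz1, hz2⟩ : z.testBit (3*k) = false ∧ z.testBit (3*k+1) = true ∧
      z.testBit (3*k+2) = false := by
    injection hz3 with a b; injection b with b c; exact ⟨a, b, c⟩
  have hdd : ∀ m j : ℕ, m / 2 ^ (3*k+j) = m / 2 ^ (3*k) / 2 ^ j := by
    intro m j
    rw [Nat.div_div_eq_div_mul, ← pow_add]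
  simp only [Nat.testBit_eq_decide_div_mod_eq, decide_eq_true_eq, decide_eq_false_iff_not,
    hdd] at hn0 hn1 hn2 hz0 hz1 hz2 ⊢
  set P := 2 ^ (3*k) with hPdef
  have hP : 0 < P := Nat.pow_pos (by norm_num)
  have hadd : n / P = y / P + z / P + if P ≤ y % P + z % P then 1 else 0 := by
    rw [← hyz]; exact Nat.add_div hP
  norm_num at hn0 hn1 hn2 hz0 hz1 hz2 ⊢
  split_ifs at hadd <;> omega
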